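/- The quaternion matrix algebra M₂(ℍ) is generated as a real unital algebra by the four projections P₁ = [[1,0],[0,0]], P₂ = (1/2)[[1,1],[1,1]], P₃ = (1/2)[[1,−i],[i,1]], P₄ = (1/2)[[1,−j],[j,1]]. -/

import Mathlib

open Matrix

noncomputable def qi : Quaternion ℝ := ⟨0, 1, 0, 0⟩
noncomputable def qj : Quaternion ℝ := ⟨0, 0, 1, 0⟩

noncomputable def P1 : Matrix (Fin 2) (Fin 2) (Quaternion ℝ) := !![1, 0; 0, 0]
noncomputable def P2 : Matrix (Fin 2) (Fin 2) (Quaternion ℝ) :=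
  (2⁻¹ : ℝ) • !![1, 1; 1, 1]
noncomputable def P3 : Matrix (Fin 2) (Fin 2) (Quaternion ℝ) :=
  (2⁻¹ : ℝ) • !![1, -qi; qi, 1]
noncomputable def P4 : Matrix (Fin 2) (Fin 2) (Quaternion ℝ) :=
  (2⁻¹ : ℝ) • !![1, -qj; qj, 1]

lemma hE01 : Matrix.single (0:Fin 2) (1:Fin 2) (1:Quaternion ℝ)
    = (2:ℝ) • (P1 * P2) - P1 := by
  refine Matrix.ext fun i j => ?_
  fin_cases i <;> fin_cases j <;>
    simp [P1, P2, Matrix.mul_apply, Fin.sum_univ_two, Matrix.single,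
      Quaternion.ext_iff] <;> norm_num

lemma hE10 : Matrix.single (1:Fin 2) (0:Fin 2) (1:Quaternion ℝ)
    = (2:ℝ) • (P2 * P1) - P1 := by
  refine Matrix.ext fun i j => ?_
  fin_cases i <;> fin_cases j <;>
    simp [P1, P2, Matrix.mul_apply, Fin.sum_univ_two, Matrix.single,
      Quaternion.ext_iff] <;> norm_num

lemma hQi : Matrix.single (0:Fin 2) (1:Fin 2) qi
    = P1 - (2:ℝ) • (P1 * P3) := by
  refine Matrix.ext fun i j => ?_
  fin_cases i <;> fin_cases j <;>
    simp [P1, P3, Matrix.mul_apply, Fin.sum_univ_two, Matrix.single,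
      Quaternion.ext_iff, qi] <;> norm_num <;> exact (neg_neg _).symm

lemma hQj : Matrix.single (0:Fin 2) (1:Fin 2) qj
    = P1 - (2:ℝ) • (P1 * P4) := by
  refine Matrix.ext fun i j => ?_
  fin_cases i <;> fin_cases j <;>
    simp [P1, P4, Matrix.mul_apply, Fin.sum_univ_two, Matrix.single,
      Quaternion.ext_iff, qj] <;> norm_num <;> exact (neg_neg _).symm

theorem stmt14 :
    Algebra.adjoin ℝ ({P1, P2, P3, P4} :
      Set (Matrix (Fin 2) (Fin 2) (Quaternion ℝ))) = ⊤ := by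
  set A := Algebra.adjoin ℝ ({P1, P2, P3, P4} :
      Set (Matrix (Fin 2) (Fin 2) (Quaternion ℝ))) with hA
  have h1 : P1 ∈ A := Algebra.subset_adjoin (by simp)
  have h2 : P2 ∈ A := Algebra.subset_adjoin (by simp)
  have h3 : P3 ∈ A := Algebra.subset_adjoin (by simp)
  have h4 : P4 ∈ A := Algebra.subset_adjoin (by simp)
  have e00 : Matrix.single (0:Fin 2) (0:Fin 2) (1:Quaternion ℝ) ∈ A := by
    have : Matrix.single (0:Fin 2) (0:Fin 2) (1:Quaternion ℝ) = P1 := by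
      refine Matrix.ext fun i j => ?_
      fin_cases i <;> fin_cases j <;> simp [P1, Matrix.single]
    rw [this]; exact h1
  have e01 : Matrix.single (0:Fin 2) (1:Fin 2) (1:Quaternion ℝ) ∈ A := by
    rw [hE01]; exact sub_mem (A.smul_mem (mul_mem h1 h2) _) h1
  have e10 : Matrix.single (1:Fin 2) (0:Fin 2) (1:Quaternion ℝ) ∈ A := by
    rw [hE10]; exact sub_mem (A.smul_mem (mul_mem h2 h1) _) h1
  have e11 : Matrix.single (1:Fin 2) (1:Fin 2) (1:Quaternion ℝ) ∈ A := by
    have := mul_mem e10 e01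
    rwa [Matrix.single_mul_single_same, one_mul] at this
  have si : Matrix.single (0:Fin 2) (0:Fin 2) qi ∈ A := by
    have h01 : Matrix.single (0:Fin 2) (1:Fin 2) qi ∈ A := by
      rw [hQi]; exact sub_mem h1 (A.smul_mem (mul_mem h1 h3) _)
    have := mul_mem h01 e10
    rwa [Matrix.single_mul_single_same, mul_one] at this
  have sj : Matrix.single (0:Fin 2) (0:Fin 2) qj ∈ A := by
    have h01 : Matrix.single (0:Fin 2) (1:Fin 2) qj ∈ A := by
      rw [hQj]; exact sub_mem h1 (A.smul_mem (mul_mem h1 h4) _)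
    have := mul_mem h01 e10
    rwa [Matrix.single_mul_single_same, mul_one] at this
  have sk : Matrix.single (0:Fin 2) (0:Fin 2) (qi * qj) ∈ A := by
    have := mul_mem si sj
    rwa [Matrix.single_mul_single_same] at this
  -- any quaternion at (0,0)
  have s00 : ∀ q : Quaternion ℝ, Matrix.single (0:Fin 2) (0:Fin 2) q ∈ A := by
    intro q
    have hq : Matrix.single (0:Fin 2) (0:Fin 2) q
        = q.re • Matrix.single (0:Fin 2) (0:Fin 2) (1:Quaternion ℝ)
        + q.imI • Matrix.single (0:Fin 2) (0:Fin 2) qi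
        + q.imJ • Matrix.single (0:Fin 2) (0:Fin 2) qj
        + q.imK • Matrix.single (0:Fin 2) (0:Fin 2) (qi * qj) := by
      rw [Matrix.smul_single, Matrix.smul_single,
        Matrix.smul_single, Matrix.smul_single,
        ← Matrix.single_add, ← Matrix.single_add,
        ← Matrix.single_add]
      refine congrArg (Matrix.single 0 0) ?_
      simp [Quaternion.ext_iff, Quaternion.re_mul, Quaternion.imI_mul,
        Quaternion.imJ_mul, Quaternion.imK_mul, Quaternion.re_smul, Quaternion.re_one,
        Quaternion.imI_one, Quaternion.imJ_one, Quaternion.imK_one] <;> simp [qi, qj]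
    rw [hq]
    exact add_mem (add_mem (add_mem (A.smul_mem e00 _) (A.smul_mem si _))
      (A.smul_mem sj _)) (A.smul_mem sk _)
  have eall : ∀ (i j : Fin 2) (q : Quaternion ℝ), Matrix.single i j q ∈ A := by
    intro i j q
    have hi : Matrix.single i (0:Fin 2) (1:Quaternion ℝ) ∈ A := by
      fin_cases i; exacts [e00, e10]
    have hj : Matrix.single (0:Fin 2) j (1:Quaternion ℝ) ∈ A := by
      fin_cases j; exacts [e00, e01]
    have := mul_mem (mul_mem hi (s00 q)) hj
    rwa [Matrix.single_mul_single_same, one_mul,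
      Matrix.single_mul_single_same, mul_one] at this
  rw [eq_top_iff]
  intro x _
  rw [Matrix.matrix_eq_sum_single x]
  exact Subalgebra.sum_mem _ fun i _ => Subalgebra.sum_mem _ fun j _ => eall i j _
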